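/- Let k be an algebraically closed field and T a k-linear, Karoubi closed (idempotent-complete) triangulated category with finite-dimensional morphism spaces admitting a Serre functor S. Let X be an indecomposable object of T and let ε_X : X → S(X) be the morphism corresponding, under the Serre duality isomorphism Hom(X, S(X)) ≅ Hom(X, X)^∨, to the linear functional Hom(X,X) → Hom(X,X)/Rad(X,X) ≅ k sending the identity to 1. Then for every morphism f : X → Y there exists g : Y → S(X) with g ∘ f = ε_X whenever f is nonzero; in particular any nonzero morphism out of X can be completed to ε_X. -/

import Mathlib

open CategoryTheory Limits Pretriangulated

universe v u

open Module


open Module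

section AlgebraAux

variable (k : Type*) [Field k] {A : Type*} [Ring A] [Algebra k A] [FiniteDimensional k A]
include k

/-- In a finite-dimensional algebra, a left inverse makes an element a unit. -/
lemma aux_isUnit_of_left_inv {v z : A} (h : v * z = 1) : IsUnit z := by
  have hinj : Function.Injective (LinearMap.mulLeft k z) := by
    intro x y hxy
    simp only [LinearMap.mulLeft_apply] at hxy
    have := congrArg (fun t => v * t) hxy
    simpa [← mul_assoc, h] using this
  obtain ⟨w, hw⟩ := (LinearMap.injective_iff_surjective).mp hinj 1
  simp only [LinearMap.mulLeft_apply] at hw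
  have hvw : v = w := by
    calc v = (v * z) * w := by rw [mul_assoc, hw, mul_one]
    _ = w := by rw [h, one_mul]
  exact ⟨⟨z, w, hw, by rw [← hvw]; exact h⟩, rfl⟩

/-- In a finite-dimensional algebra, a right inverse makes an element a unit. -/
lemma aux_isUnit_of_right_inv {v z : A} (h : z * v = 1) : IsUnit z := by
  have hinj : Function.Injective (LinearMap.mulRight k z) := by
    intro x y hxy
    simp only [LinearMap.mulRight_apply] at hxy
    have := congrArg (fun t => t * v) hxy
    simpa [mul_assoc, h] using this
  obtain ⟨w, hw⟩ := (LinearMap.injective_iff_surjective).mp hinj 1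
  simp only [LinearMap.mulRight_apply] at hw
  have hvw : v = w := by
    calc v = w * (z * v) := by rw [← mul_assoc, hw, one_mul]
    _ = w := by rw [h, mul_one]
  exact ⟨⟨z, w, by rw [← hvw]; exact h, hw⟩, rfl⟩

/-- Fitting: in a finite-dimensional algebra with no nontrivial idempotents,
every element is a unit or nilpotent. -/
lemma aux_isUnit_or_isNilpotent
    (hidem : ∀ e : A, e * e = e → e = 0 ∨ e = 1) (a : A) :
    IsUnit a ∨ IsNilpotent a := by
  obtain ⟨N, hN⟩ := Filter.eventually_atTop.mp
    (LinearMap.eventually_isCompl_ker_pow_range_pow (LinearMap.mulRight k a))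
  set n := N + 1 with hn
  have hcompl := hN n (Nat.le_add_right N 1)
  rw [LinearMap.pow_mulRight] at hcompl
  have h1 : (1 : A) ∈ LinearMap.ker (LinearMap.mulRight k (a ^ n)) ⊔
      LinearMap.range (LinearMap.mulRight k (a ^ n)) := by
    rw [codisjoint_iff.mp hcompl.codisjoint]; trivial
  obtain ⟨y, hy, e, he, hye⟩ := Submodule.mem_sup.mp h1
  have hyK : y * a ^ n = 0 := by simpa using hy
  obtain ⟨z, hz⟩ := he
  simp only [LinearMap.mulRight_apply] at hz
  have heid : e * e = e := by
    have hy' : y = 1 - e := by rw [← hye]; abel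
    have hmemK : e - e * e ∈ LinearMap.ker (LinearMap.mulRight k (a ^ n)) := by
      have h2 : e - e * e = e * y := by rw [hy', mul_sub, mul_one]
      simp only [LinearMap.mem_ker, LinearMap.mulRight_apply, h2, mul_assoc, hyK, mul_zero]
    have hmemR : e - e * e ∈ LinearMap.range (LinearMap.mulRight k (a ^ n)) := by
      refine Submodule.sub_mem _ ⟨z, by simpa using hz⟩ ⟨e * z, ?_⟩
      simp only [LinearMap.mulRight_apply, mul_assoc, hz]
    have := Submodule.disjoint_def.mp hcompl.disjoint _ hmemK hmemR
    linear_combination (norm := abel) -this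
  rcases hidem e heid with h0 | h1
  · right
    refine ⟨n, ?_⟩
    have hy1 : y = 1 := by rw [← hye, h0, add_zero]
    rw [hy1, one_mul] at hyK
    exact hyK
  · left
    have hza : z * a ^ n = 1 := by rw [hz, h1]
    have hu : IsUnit (a ^ n) := aux_isUnit_of_left_inv k hza
    have : a ^ n = a * a ^ N := by rw [hn, pow_succ']
    rw [this] at hu
    exact ((Commute.isUnit_mul_iff (Commute.self_pow a N)).mp hu).1

end AlgebraAux

section AlgClosed
variable (k : Type*) [Field k] [IsAlgClosed k]
  {A : Type*} [Ring A] [Algebra k A] [FiniteDimensional k A]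
include k

/-- Spectrum decomposition: any element is a scalar plus a nonunit. -/
lemma aux_exists_smul_add [Nontrivial A] (b : A) :
    ∃ (c : k) (u : A), b = c • (1 : A) + u ∧ ¬ IsUnit u := by
  obtain ⟨c, hc⟩ := spectrum.nonempty_of_isAlgClosed_of_finiteDimensional k b
  rw [spectrum.mem_iff] at hc
  refine ⟨c, -((algebraMap k A) c - b), ?_, ?_⟩
  · rw [Algebra.algebraMap_eq_smul_one] at *
    abel
  · rw [IsUnit.neg_iff]; exact hc

lemma aux_nonunit_of_mul {c u : A} (h : ¬ IsUnit u) : ¬ IsUnit (c * u) := by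
  intro hcu
  obtain ⟨w, hw⟩ := hcu
  have : ((↑w⁻¹ : A) * c) * u = 1 := by
    rw [mul_assoc, ← hw, Units.inv_mul]
  exact h (aux_isUnit_of_left_inv k this)

/-- Key step: below any nonzero left ideal there is one of `k`-codimension one. -/
lemma aux_key1 (hidem : ∀ e : A, e * e = e → e = 0 ∨ e = 1)
    (I : Submodule A A) (hI : I ≠ ⊥) :
    ∃ I' : Submodule A A, I' < I ∧
      finrank k (I.restrictScalars k) = finrank k (I'.restrictScalars k) + 1 := by
  obtain ⟨x₀, hx₀I, hx₀⟩ := Submodule.exists_mem_ne_zero_of_ne_bot hI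
  haveI : Nontrivial A := nontrivial_of_ne x₀ 0 hx₀
  haveI : IsNoetherian A A := isNoetherian_of_tower k inferInstance
  obtain ⟨I', hI'mem, hmax⟩ := set_has_maximal_iff_noetherian.mpr inferInstance
    {J : Submodule A A | J < I} ⟨⊥, Ne.bot_lt hI⟩
  have hI'lt : I' < I := hI'mem
  obtain ⟨x, hxI, hxI'⟩ := SetLike.exists_of_lt hI'lt
  have hx0 : x ≠ 0 := fun h => hxI' (h ▸ I'.zero_mem)
  have claimA : ∀ b : A, b * x ∉ I' → ∃ c : A, (1 - c * b) * x ∈ I' := by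
    intro b hbx
    set J := I' ⊔ Submodule.span A {b * x} with hJ
    have hbxI : b * x ∈ I := by simpa [smul_eq_mul] using I.smul_mem b hxI
    have hJI : J ≤ I := sup_le hI'lt.le (by rwa [Submodule.span_singleton_le_iff_mem])
    have hJgt : I' < J := by
      refine lt_of_le_of_ne le_sup_left (fun h => hbx ?_)
      rw [h]
      exact Submodule.mem_sup_right (Submodule.mem_span_singleton_self (b * x))
    have hJeq : J = I := by
      by_contra h
      exact hmax J (lt_of_le_of_ne hJI h) hJgt
    have hxJ : x ∈ J := hJeq ▸ hxI
    obtain ⟨i', hi', d, hd, hsum⟩ := Submodule.mem_sup.mp hxJ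
    obtain ⟨c, hc⟩ := Submodule.mem_span_singleton.mp hd
    refine ⟨c, ?_⟩
    have : (1 - c * b) * x = i' := by
      rw [sub_mul, one_mul, mul_assoc]
      rw [smul_eq_mul] at hc
      rw [hc]
      rw [← hsum]
      abel
    rw [this]; exact hi'
  have claimB : ∀ u : A, ¬ IsUnit u → u * x ∈ I' := by
    intro u hu
    by_contra hux
    obtain ⟨c, hc⟩ := claimA u hux
    have hnil : IsNilpotent (c * u) :=
      (aux_isUnit_or_isNilpotent k hidem (c * u)).resolve_left (aux_nonunit_of_mul k hu)
    obtain ⟨w, hw⟩ := hnil.isUnit_one_sub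
    have hx' : x = (↑w⁻¹ : A) * ((1 - c * u) * x) := by
      rw [← mul_assoc, ← hw, Units.inv_mul, one_mul]
    exact hxI' (hx' ▸ (by simpa [smul_eq_mul] using I'.smul_mem (↑w⁻¹ : A) hc))
  have hdecomp : ∀ y ∈ I, ∃ c : k, y - c • x ∈ I' := by
    intro y hy
    have hx1 : (1 : A) * x ∉ I' := by rwa [one_mul]
    -- I = I' ⊔ span A {x}
    set J := I' ⊔ Submodule.span A {x} with hJ
    have hJI : J ≤ I := sup_le hI'lt.le (by rwa [Submodule.span_singleton_le_iff_mem])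
    have hJgt : I' < J := by
      refine lt_of_le_of_ne le_sup_left (fun h => hxI' ?_)
      rw [h]; exact Submodule.mem_sup_right (Submodule.mem_span_singleton_self x)
    have hJeq : J = I := by
      by_contra h
      exact hmax J (lt_of_le_of_ne hJI h) hJgt
    obtain ⟨i', hi', d, hd, hsum⟩ := Submodule.mem_sup.mp (hJeq ▸ hy)
    obtain ⟨b, hb⟩ := Submodule.mem_span_singleton.mp hd
    obtain ⟨c, u, hbu, hu⟩ := aux_exists_smul_add k b
    refine ⟨c, ?_⟩
    have : y - c • x = i' + u * x := by
      rw [smul_eq_mul] at hb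
      rw [← hsum, ← hb, hbu]
      rw [add_mul, smul_mul_assoc, one_mul]
      abel
    rw [this]
    exact I'.add_mem hi' (claimB u hu)
  have hsub : (I.restrictScalars k) = (I'.restrictScalars k) ⊔ Submodule.span k {x} := by
    apply le_antisymm
    · intro y hy
      obtain ⟨c, hc⟩ := hdecomp y hy
      have : y = (y - c • x) + c • x := by abel
      rw [this]
      exact Submodule.add_mem _ (Submodule.mem_sup_left hc)
        (Submodule.mem_sup_right (Submodule.smul_mem _ _ (Submodule.mem_span_singleton_self x)))
    · refine sup_le (fun y hy => hI'lt.le hy) ?_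
      rw [Submodule.span_singleton_le_iff_mem]
      exact hxI
  have hlt2 : (I'.restrictScalars k) < (I.restrictScalars k) :=
    SetLike.lt_iff_le_and_exists.mpr ⟨fun y hy => hI'lt.le hy, x, hxI, hxI'⟩
  have h1 : finrank k (I'.restrictScalars k) < finrank k (I.restrictScalars k) :=
    Submodule.finrank_lt_finrank_of_lt hlt2
  have h2 : finrank k (I.restrictScalars k) ≤ finrank k (I'.restrictScalars k) + 1 := by
    rw [hsub]
    have := Submodule.finrank_sup_add_finrank_inf_eq (I'.restrictScalars k)
      (Submodule.span k {x})
    have hspan : finrank k (Submodule.span k ({x} : Set A)) = 1 := finrank_span_singleton hx0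
    omega
  exact ⟨I', hI'lt, by omega⟩

/-- Dimension transport along a ring isomorphism. -/
lemma aux_finrank_le {B : Type*} [Ring B] [Algebra k B] [FiniteDimensional k B]
    (hidemB : ∀ e : B, e * e = e → e = 0 ∨ e = 1) (Ψ : B ≃+* A) :
    finrank k B ≤ finrank k A := by
  let F : Submodule B B → Submodule k A := fun I =>
    { carrier := Ψ '' I
      add_mem' := by
        rintro _ _ ⟨a, ha, rfl⟩ ⟨b, hb, rfl⟩
        exact ⟨a + b, I.add_mem ha hb, map_add Ψ a b⟩
      zero_mem' := ⟨0, I.zero_mem, map_zero Ψ⟩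
      smul_mem' := by
        rintro c _ ⟨a, ha, rfl⟩
        refine ⟨Ψ.symm ((algebraMap k A) c) * a, ?_, ?_⟩
        · simpa [smul_eq_mul] using I.smul_mem (Ψ.symm ((algebraMap k A) c)) ha
        · rw [map_mul, RingEquiv.apply_symm_apply, ← Algebra.smul_def] }
  have hFmono : ∀ {I J : Submodule B B}, I < J → F I < F J := by
    intro I J hIJ
    obtain ⟨y, hyJ, hyI⟩ := SetLike.exists_of_lt hIJ
    refine SetLike.lt_iff_le_and_exists.mpr ⟨?_, Ψ y, ⟨y, hyJ, rfl⟩, ?_⟩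
    · rintro _ ⟨a, ha, rfl⟩
      exact ⟨a, hIJ.le ha, rfl⟩
    · rintro ⟨a, ha, hay⟩
      exact hyI ((Ψ.injective hay) ▸ ha)
  have main : ∀ (n : ℕ) (I : Submodule B B), finrank k (I.restrictScalars k) = n →
      n ≤ finrank k (F I) := by
    intro n
    induction n with
    | zero => intro I _; exact Nat.zero_le _
    | succ m ih =>
      intro I hn
      have hIbot : I ≠ ⊥ := by
        rintro rfl
        rw [Submodule.restrictScalars_bot, finrank_bot] at hn
        omega
      obtain ⟨I', hlt, hrk⟩ := aux_key1 k hidemB I hIbot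
      have h1 : m ≤ finrank k (F I') := ih I' (by omega)
      have h2 : finrank k (F I') < finrank k (F I) :=
        Submodule.finrank_lt_finrank_of_lt (hFmono hlt)
      omega
  have htop := main (finrank k ((⊤ : Submodule B B).restrictScalars k)) ⊤ rfl
  calc finrank k B = finrank k ((⊤ : Submodule B B).restrictScalars k) := by
        rw [Submodule.restrictScalars_top, finrank_top]
  _ ≤ finrank k (F ⊤) := htop
  _ ≤ finrank k A := Submodule.finrank_le _

end AlgClosed


section CategoryAux

open CategoryTheory

variable {T : Type u} [Category.{v} T] [Preadditive T]

/-- The ring isomorphism `End X ≃+* End (S X)` induced by a fully faithful additive functor. -/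
noncomputable def mapRingEquiv (S : T ⥤ T) [S.Additive] [S.Full] [S.Faithful] (X : T) :
    End X ≃+* End (S.obj X) where
  toFun f := (S.map f : End (S.obj X))
  invFun g := (S.preimage g : End X)
  left_inv f := S.preimage_map f
  right_inv g := S.map_preimage g
  map_mul' f g := S.map_comp g f
  map_add' f g := S.map_add

lemma idem_transport {A B : Type*} [Ring A] [Ring B] (Ψ : A ≃+* B)
    (h : ∀ e : A, e * e = e → e = 0 ∨ e = 1) :
    ∀ e : B, e * e = e → e = 0 ∨ e = 1 := by
  intro e he
  have : Ψ.symm e * Ψ.symm e = Ψ.symm e := by rw [← map_mul, he]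
  rcases h _ this with h0 | h1
  · left
    have := congrArg Ψ h0
    simpa using this
  · right
    have := congrArg Ψ h1
    simpa using this

end CategoryAux


open CategoryTheory Limits Pretriangulated

/-- In a `k`-linear, Karoubi closed triangulated category with finite-dimensional
morphism spaces over an algebraically closed field, with a Serre functor `S` (encoded by
its trace functionals `tr A : Hom(A, S A) → k` and the nondegeneracy of the induced
Serre pairing `Hom(A,B) ⊗ Hom(B, S A) → k`), let `X` be an indecomposable object and
`ε_X : X ⟶ S X` the morphism dual to the functional `End(X) → End(X)/Rad ≅ k` sending
the identity to `1`.  Then every nonzero morphism `f : X ⟶ Y` can be completed to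
`ε_X`: there is `g : Y ⟶ S X` with `g ∘ f = ε_X`. -/
theorem serre_extend {k : Type*} [Field k] [IsAlgClosed k]
    {T : Type u} [Category.{v} T] [HasZeroObject T] [HasShift T ℤ] [Preadditive T]
    [∀ n : ℤ, (shiftFunctor T n).Additive] [Pretriangulated T]
    [Linear k T] [IsIdempotentComplete T]
    (hfin : ∀ A B : T, FiniteDimensional k (A ⟶ B))
    (S : T ⥤ T) [S.IsEquivalence] [S.Additive]
    (tr : ∀ A : T, (A ⟶ S.obj A) →ₗ[k] k)
    (nondeg : ∀ (A B : T) (f : A ⟶ B), f ≠ 0 → ∃ g : B ⟶ S.obj A, tr A (f ≫ g) ≠ 0)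
    (X : T) (hXnz : ¬ IsZero X)
    (hXind : ∀ p : X ⟶ X, p ≫ p = p → p = 0 ∨ p = 𝟙 X)
    (εX : X ⟶ S.obj X) (hε1 : tr X εX = 1)
    (hεrad : ∀ r : X ⟶ X, ¬ IsIso r → tr X (r ≫ εX) = 0)
    (Y : T) (f : X ⟶ Y) (hf : f ≠ 0) :
    ∃ g : Y ⟶ S.obj X, f ≫ g = εX := by
  classical
  haveI := hfin X X
  haveI := hfin X (S.obj X)
  haveI := hfin (S.obj X) (S.obj X)
  haveI : FiniteDimensional k (End X) := hfin X X
  haveI : FiniteDimensional k (End (S.obj X)) := hfin (S.obj X) (S.obj X)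
  -- the pairing map Θ : (X ⟶ X) → Dual (X ⟶ S X), r ↦ (s ↦ tr (r ≫ s))
  let Θ : (X ⟶ X) →ₗ[k] Module.Dual k (X ⟶ S.obj X) :=
    { toFun := fun r => (tr X).comp (Linear.leftComp k (S.obj X) r)
      map_add' := by
        intro r₁ r₂; ext s
        simp [Linear.leftComp, Preadditive.add_comp]
      map_smul' := by
        intro c r; ext s
        simp [Linear.leftComp, Linear.smul_comp] }
  have hΘinj : Function.Injective Θ := by
    rw [injective_iff_map_eq_zero]
    intro r hr
    by_contra hrne
    obtain ⟨s, hs⟩ := nondeg X X r hrne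
    apply hs
    have : Θ r s = 0 := by rw [hr]; rfl
    simpa [Θ, Linear.leftComp] using this
  -- the pairing map Φ : (X ⟶ S X) → Dual (S X ⟶ S X), s ↦ (u ↦ tr (s ≫ u))
  let Φ : (X ⟶ S.obj X) →ₗ[k] Module.Dual k (S.obj X ⟶ S.obj X) :=
    { toFun := fun s => (tr X).comp (Linear.leftComp k (S.obj X) s)
      map_add' := by
        intro s₁ s₂; ext u
        simp [Linear.leftComp, Preadditive.add_comp]
      map_smul' := by
        intro c s; ext u
        simp [Linear.leftComp, Linear.smul_comp] }
  have hΦinj : Function.Injective Φ := by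
    rw [injective_iff_map_eq_zero]
    intro s hs
    by_contra hsne
    obtain ⟨u, hu⟩ := nondeg X (S.obj X) s hsne
    apply hu
    have : Φ s u = 0 := by rw [hs]; rfl
    simpa [Φ, Linear.leftComp] using this
  -- dimension comparison
  have hidemE : ∀ e : End X, e * e = e → e = 0 ∨ e = 1 := by
    intro e he
    exact hXind e he
  have hidemB := idem_transport (mapRingEquiv S X) hidemE
  have hd3 : Module.finrank k (End (S.obj X)) ≤ Module.finrank k (End X) :=
    aux_finrank_le k hidemB (mapRingEquiv S X).symm
  have hd3' : Module.finrank k (S.obj X ⟶ S.obj X) ≤ Module.finrank k (X ⟶ X) := hd3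
  have hd1 : Module.finrank k (X ⟶ X) ≤ Module.finrank k (X ⟶ S.obj X) := by
    have := LinearMap.finrank_le_finrank_of_injective hΘinj
    rwa [Subspace.dual_finrank_eq] at this
  have hd2 : Module.finrank k (X ⟶ S.obj X) ≤ Module.finrank k (S.obj X ⟶ S.obj X) := by
    have := LinearMap.finrank_le_finrank_of_injective hΦinj
    rwa [Subspace.dual_finrank_eq] at this
  have hdim : Module.finrank k (X ⟶ X)
      = Module.finrank k (Module.Dual k (X ⟶ S.obj X)) := by
    rw [Subspace.dual_finrank_eq]
    omega
  have hΘsurj : Function.Surjective Θ :=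
    (LinearMap.injective_iff_surjective_of_finrank_eq_finrank hdim).mp hΘinj
  -- now the completion argument
  by_contra hcon
  push_neg at hcon
  have hnmem : εX ∉ LinearMap.range (Linear.leftComp k (S.obj X) f) := by
    intro hmem
    obtain ⟨g, hg⟩ := hmem
    exact hcon g (by simpa [Linear.leftComp] using hg)
  obtain ⟨ψ, hψε, hψbot⟩ :=
    Submodule.exists_dual_map_eq_bot_of_notMem hnmem inferInstance
  obtain ⟨r, hr⟩ := hΘsurj ψ
  have hvan : ∀ g : Y ⟶ S.obj X, tr X ((r ≫ f) ≫ g) = 0 := by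
    intro g
    have hmem : (f ≫ g) ∈ LinearMap.range (Linear.leftComp k (S.obj X) f) :=
      ⟨g, by simp [Linear.leftComp]⟩
    have hz : ψ (f ≫ g) = 0 := by
      have := hψbot.le (Submodule.mem_map_of_mem hmem)
      exact (Submodule.mem_bot k).mp this
    rw [← hr] at hz
    simpa [Θ, Linear.leftComp, Category.assoc] using hz
  have hrf : r ≫ f = 0 := by
    by_contra hne
    obtain ⟨g, hg⟩ := nondeg X Y (r ≫ f) hne
    exact hg (hvan g)
  have hriso : ¬ IsIso r := by
    intro hiso
    apply hf
    have := congrArg (fun t => inv r ≫ t) hrf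
    simpa using this
  have hzero : ψ εX = 0 := by
    rw [← hr]
    simpa [Θ, Linear.leftComp] using hεrad r hriso
  exact hψε hzero
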